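/- Let 0 < ε < π/2 and μ > 0, and for λ ∈ Σ_{ε,0} and A > 0 set B = √(μ^{-1}λ + A²) with Re B > 0 and M(x) = (e^{-Bx} − e^{-Ax})/(B − A) for x > 0 (interpreted as −x e^{-Ax} when B = A). Then there exist constants C, c > 0 depending only on ε, μ such that |B·M(x)| ≤ C e^{-cAx} for all x > 0, λ ∈ Σ_{ε,0}, A > 0. -/

import Mathlib

open Complex

lemma aux_texp (t : ℝ) : t * Real.exp (-t) ≤ 2 * Real.exp (-(t/2)) := by
  have h1 : t ≤ 2 * Real.exp (t/2) := by
    have h := Real.add_one_le_exp (t/2 - 1)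
    have h2 : Real.exp (t/2 - 1) ≤ Real.exp (t/2) := Real.exp_le_exp.2 (by linarith)
    linarith
  calc t * Real.exp (-t) ≤ 2 * Real.exp (t/2) * Real.exp (-t) :=
        mul_le_mul_of_nonneg_right h1 (Real.exp_nonneg _)
    _ = 2 * Real.exp (-(t/2)) := by rw [mul_assoc, ← Real.exp_add]; ring_nf

set_option maxHeartbeats 1000000 in
lemma sector_bound (ε μ : ℝ) (hε : 0 < ε) (hε' : ε < Real.pi/2) (hμ : 0 < μ)
    (l : ℂ) (A : ℝ) (hl : l ≠ 0) (harg : |l.arg| ≤ Real.pi - ε) (hA : 0 < A) :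
    Real.sin ε ^ 2 / (2 * (2 + Real.sin ε)) * A ^ 2
      ≤ ‖(μ:ℂ)⁻¹ * l + (A:ℂ)^2‖ + ((μ:ℂ)⁻¹ * l + (A:ℂ)^2).re := by
  have hpi := Real.pi_pos
  set s := Real.sin ε with hsdef
  have hs0 : 0 < s := Real.sin_pos_of_pos_of_lt_pi hε (by linarith)
  have hs1 : s ≤ 1 := Real.sin_le_one ε
  set w : ℂ := (μ:ℂ)⁻¹ * l + (A:ℂ)^2 with hw
  have hμ' : (0:ℝ) < μ⁻¹ := inv_pos.2 hμ
  have hwre : w.re = μ⁻¹ * l.re + A^2 := by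
    simp [hw, Complex.add_re, Complex.mul_re, Complex.inv_re, Complex.inv_im,
      ← Complex.ofReal_pow]
  have hwim : w.im = μ⁻¹ * l.im := by
    simp [hw, Complex.add_im, Complex.mul_im, Complex.inv_re, Complex.inv_im,
      ← Complex.ofReal_pow]
  have hKre : |w.re| ≤ ‖w‖ := Complex.abs_re_le_norm w
  have hK2 : (‖w‖)^2 = w.re^2 + w.im^2 := by
    rw [Complex.sq_norm, Complex.normSq_apply]; ring
  have hc1 : s^2/(2*(2+s)) ≤ 1 := by
    rw [div_le_one (by nlinarith)]; nlinarith
  by_cases hcase : A^2/2 ≤ w.re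
  · have h2 : w.re ≤ ‖w‖ := (le_abs_self _).trans hKre
    nlinarith [norm_nonneg w]
  · push_neg at hcase
    have hpre : μ⁻¹ * l.re < -(A^2/2) := by rw [hwre] at hcase; linarith
    have hlre : l.re < 0 := by nlinarith
    -- |sin (arg l)| ≥ s
    have hl0 : (0:ℝ) < ‖l‖ := by
      simpa using (norm_pos_iff.2 hl)
    have hargpi2 : Real.pi/2 < |l.arg| := by
      by_contra h
      push_neg at h
      have := Complex.abs_arg_le_pi_div_two_iff.1 h
      linarith
    have hsin : s ≤ |Real.sin l.arg| := by
      have habs : |Real.sin l.arg| = Real.sin |l.arg| := by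
        rcases abs_cases l.arg with ⟨h1, h2⟩ | ⟨h1, h2⟩
        · rw [h1, _root_.abs_of_nonneg
            (Real.sin_nonneg_of_nonneg_of_le_pi h2 (Complex.arg_le_pi l))]
        · have h3 : Real.sin l.arg ≤ 0 := Real.sin_nonpos_of_nonpos_of_neg_pi_le h2.le
            (Complex.neg_pi_lt_arg l).le
          rw [h1, _root_.abs_of_nonpos h3, Real.sin_neg]
      rw [habs, ← Real.sin_pi_sub]
      have h1 : ε ≤ Real.pi - |l.arg| := by linarith
      have h2 : Real.pi - |l.arg| ≤ Real.pi/2 := by linarith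
      exact Real.strictMonoOn_sin.monotoneOn ⟨by linarith, by linarith⟩
        ⟨by linarith, h2⟩ h1
    have him : s * |l.re| ≤ |l.im| := by
      have h1 : l.im = Real.sin l.arg * ‖l‖ := by
        rw [Complex.sin_arg, div_mul_cancel₀]
        exact ne_of_gt hl0
      have h2 : |l.im| = |Real.sin l.arg| * ‖l‖ := by
        rw [h1, abs_mul, abs_of_pos hl0]
      have h3 : |l.re| ≤ ‖l‖ := Complex.abs_re_le_norm l
      rw [h2]
      nlinarith
    -- now with p = w.re - A^2 = μ⁻¹ l.re < -(A^2/2), |w.im| ≥ s * (-p), |w.re| ≤ -p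
    have hvp : s * (-(μ⁻¹ * l.re)) ≤ |w.im| := by
      rw [hwim, abs_mul, abs_of_pos hμ']
      have : -(μ⁻¹ * l.re) = μ⁻¹ * |l.re| := by
        rw [abs_of_neg hlre]; ring
      rw [this]
      nlinarith
    have hup : |w.re| ≤ -(μ⁻¹ * l.re) := by
      rw [hwre]
      rcases abs_cases (μ⁻¹ * l.re + A^2) with ⟨h1, h2⟩ | ⟨h1, h2⟩ <;> rw [h1] <;>
        linarith [hpre, sq_nonneg A]
    have hv0 : s * (A^2/2) ≤ |w.im| := by
      have h9 : s * (A^2/2) ≤ s * (-(μ⁻¹ * l.re)) :=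
        mul_le_mul_of_nonneg_left (by linarith) hs0.le
      linarith [hvp]
    have hvv : (0:ℝ) < |w.im| := by
      have : (0:ℝ) < s * (A^2/2) := by positivity
      linarith
    have hKu : 0 ≤ ‖w‖ + w.re := by
      have := neg_abs_le w.re; linarith
    have hKim : |w.im| ≤ ‖w‖ := Complex.abs_im_le_norm w
    have habssum : ‖w‖ ≤ |w.re| + |w.im| := Complex.norm_le_abs_re_add_abs_im w
    -- s * (K - u) ≤ (2+s) * |v|
    have h5 : s * (‖w‖ - w.re) ≤ (2+s) * |w.im| := by
      have h6 : ‖w‖ - w.re ≤ 2 * |w.re| + |w.im| := by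
        have := neg_abs_le w.re; linarith
      nlinarith
    -- (K+u)(K-u) = v^2 = |v|^2
    have h7 : (‖w‖ + w.re) * (‖w‖ - w.re) = |w.im|^2 := by
      rw [_root_.sq_abs]; nlinarith [hK2]
    rw [div_mul_eq_mul_div, div_le_iff₀ (by nlinarith)]
    -- goal : s^2 * A^2 ≤ (K + u) * (2*(2+s))
    have e1 : s * |w.im|^2 ≤ (2+s) * |w.im| * (‖w‖ + w.re) := by
      nlinarith [mul_le_mul_of_nonneg_left h5 hKu, h7]
    have e2 : s * A^2 * (s * |w.im|) ≤ 2*|w.im| * (s * |w.im|) :=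
      mul_le_mul_of_nonneg_right (by linarith) (mul_nonneg hs0.le hvv.le)
    have key : |w.im| * (s^2 * A^2) ≤ |w.im| * ((‖w‖ + w.re) * (2*(2+s))) := by
      nlinarith [e1, e2]
    exact le_of_mul_le_mul_left key hvv

set_option maxHeartbeats 1000000 in
/-- Let `0 < ε < π/2`, `μ > 0`.  For `λ ∈ Σ_{ε,0}` and `A > 0` set
`B = (μ⁻¹λ + A²)^{1/2}` with `Re B > 0` and `M(x) = (e^{-Bx} − e^{-Ax})/(B − A)`
(interpreted as `−x e^{-Ax}` when `B = A`).  Then there are `C, c > 0` depending only on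
`ε, μ` with `|B·M(x)| ≤ C e^{-cAx}` for all `x > 0`. -/
theorem BM_decay_estimate (ε μ : ℝ) (hε : 0 < ε) (hε' : ε < Real.pi / 2) (hμ : 0 < μ) :
    ∃ C c : ℝ, 0 < C ∧ 0 < c ∧
      ∀ (l : ℂ) (A x : ℝ), l ≠ 0 → |l.arg| ≤ Real.pi - ε → 0 < A → 0 < x →
        ∀ B M : ℂ, B = ((μ : ℂ)⁻¹ * l + (A : ℂ) ^ 2) ^ ((1 : ℂ) / 2) →
          M = (if B = (A : ℂ) then -(x : ℂ) * Complex.exp (-(A : ℂ) * (x : ℂ))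
               else (Complex.exp (-B * (x : ℂ)) - Complex.exp (-(A : ℂ) * (x : ℂ))) / (B - (A : ℂ))) →
          ‖B * M‖ ≤ C * Real.exp (-(c * A * x)) := by
  have hpi := Real.pi_pos
  set s := Real.sin ε with hsdef
  have hs0 : 0 < s := Real.sin_pos_of_pos_of_lt_pi hε (by linarith)
  have hs1 : s ≤ 1 := Real.sin_le_one ε
  set c1 : ℝ := s^2/(2*(2+s)) with hc1def
  have hc10 : 0 < c1 := by positivity
  have hc11 : c1 ≤ 1 := by
    rw [hc1def, div_le_one (by nlinarith)]; nlinarith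
  set c0 : ℝ := Real.sqrt (c1/2) with hc0def
  have hc00 : 0 < c0 := Real.sqrt_pos.2 (by positivity)
  have hc01 : c0 ≤ 1 := by
    rw [hc0def, show (1:ℝ) = Real.sqrt 1 by rw [Real.sqrt_one]]
    exact Real.sqrt_le_sqrt (by linarith)
  have h6c0 : (0:ℝ) ≤ 6/c0 := by positivity
  refine ⟨6/c0 + 6, c0/4, by positivity, by positivity, ?_⟩
  intro l A x hl harg hA hx B M hB hM
  have hwkey := sector_bound ε μ hε hε' hμ l A hl harg hA
  set w : ℂ := (μ:ℂ)⁻¹ * l + (A:ℂ)^2 with hw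
  have hBre : B.re = Real.sqrt ((‖w‖ + w.re)/2) := by
    rw [hB, show (1:ℂ)/2 = (2⁻¹ : ℂ) by norm_num]
    exact Complex.cpow_inv_two_re w
  have hr : c0 * A ≤ B.re := by
    rw [hBre]
    have h1 : c1/2 * A^2 ≤ (‖w‖ + w.re)/2 := by linarith
    calc c0 * A = Real.sqrt (c1/2 * A^2) := by
          rw [Real.sqrt_mul (by positivity), Real.sqrt_sq hA.le]
      _ ≤ _ := Real.sqrt_le_sqrt h1
  have hr0 : (0:ℝ) < B.re := lt_of_lt_of_le (by positivity) hr
  have hAx : (0:ℝ) < A * x := mul_pos hA hx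
  have hcAx : (0:ℝ) ≤ c0 * (A * x) := by positivity
  -- abs values of exponentials
  have hreBx : (-B * (x:ℂ)).re = -(B.re * x) := by simp [Complex.mul_re]
  have hreAx : (-(A:ℂ) * (x:ℂ)).re = -(A * x) := by simp [Complex.mul_re]
  have habsBx : ‖Complex.exp (-B * (x:ℂ))‖ = Real.exp (-(B.re * x)) := by
    rw [Complex.norm_exp, hreBx]
  have habsAx : ‖Complex.exp (-(A:ℂ) * (x:ℂ))‖ = Real.exp (-(A * x)) := by
    rw [Complex.norm_exp, hreAx]
  set E' : ℝ := Real.exp (-(c0/4 * A * x)) with hE'def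
  have hE'0 : 0 < E' := Real.exp_pos _
  set E : ℝ := Real.exp (-(c0 * A * x)) with hEdef
  have hE0 : 0 < E := Real.exp_pos _
  have hEE' : E ≤ E' := Real.exp_le_exp.2 (by linarith [hcAx])
  have hAxE' : Real.exp (-(A*x/2)) ≤ E' := by
    apply Real.exp_le_exp.2
    have h1 : 0 ≤ (2 - c0) * (A * x) := mul_nonneg (by linarith) hAx.le
    nlinarith [h1]
  have hAxE : Real.exp (-(A*x)) ≤ E := by
    apply Real.exp_le_exp.2
    have h1 : 0 ≤ (1 - c0) * (A * x) := mul_nonneg (by linarith) hAx.le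
    nlinarith [h1]
  have hBxE : Real.exp (-(B.re*x)) ≤ E := by
    apply Real.exp_le_exp.2
    have h1 : 0 ≤ (B.re - c0 * A) * x := mul_nonneg (by linarith) hx.le
    nlinarith [h1]
  by_cases hBA : B = (A:ℂ)
  · -- case B = A
    rw [hM, if_pos hBA, hBA]
    have hcalc : ‖(A:ℂ) * (-(x:ℂ) * Complex.exp (-(A:ℂ) * (x:ℂ)))‖
        = A * x * Real.exp (-(A*x)) := by
      rw [norm_mul, norm_mul, norm_neg, Complex.norm_real, Complex.norm_real,
        habsAx, Real.norm_eq_abs, Real.norm_eq_abs, abs_of_pos hA, abs_of_pos hx]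
      ring
    rw [hcalc]
    calc A * x * Real.exp (-(A*x)) ≤ 2 * Real.exp (-(A*x/2)) := aux_texp (A*x)
      _ ≤ 2 * E' := by linarith [hAxE']
      _ ≤ (6/c0 + 6) * E' := mul_le_mul_of_nonneg_right (by linarith) hE'0.le
  · -- case B ≠ A
    set D : ℝ := ‖B - (A:ℂ)‖ with hDdef
    have hD0 : 0 < D := by
      rw [hDdef]
      simpa using sub_ne_zero.2 hBA
    have hBle : ‖B‖ ≤ A + D := by
      calc ‖B‖ = ‖(A:ℂ) + (B - (A:ℂ))‖ := by ring_nf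
        _ ≤ ‖(A:ℂ)‖ + D := by rw [hDdef]; exact norm_add_le _ _
        _ = A + D := by rw [Complex.norm_real, Real.norm_eq_abs, abs_of_pos hA]
    set N : ℝ := ‖Complex.exp (-B * (x:ℂ)) - Complex.exp (-(A:ℂ) * (x:ℂ))‖ with hNdef
    have hN0 : 0 ≤ N := norm_nonneg _
    have hNle : N ≤ 2 * E := by
      calc N ≤ ‖Complex.exp (-B * (x:ℂ))‖
            + ‖Complex.exp (-(A:ℂ) * (x:ℂ))‖ := norm_sub_le _ _
        _ = Real.exp (-(B.re*x)) + Real.exp (-(A*x)) := by rw [habsBx, habsAx]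
        _ ≤ 2 * E := by linarith
    have hBM : ‖B * M‖ = ‖B‖ * N / D := by
      rw [hM, if_neg hBA, norm_mul, norm_div, hNdef, hDdef, mul_div_assoc]
    rw [hBM, div_le_iff₀ hD0]
    by_cases hDA : A/2 < D
    · -- D large
      calc ‖B‖ * N ≤ (A + D) * (2*E) :=
            mul_le_mul hBle hNle hN0 (by linarith)
        _ ≤ (3*D) * (2*E) := mul_le_mul_of_nonneg_right (by linarith) (by positivity)
        _ = (6*E)*D := by ring
        _ ≤ (6*E')*D := mul_le_mul_of_nonneg_right (by linarith) hD0.le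
        _ ≤ ((6/c0+6)*E')*D := by
            apply mul_le_mul_of_nonneg_right _ hD0.le
            exact mul_le_mul_of_nonneg_right (by linarith) hE'0.le
        _ = (6/c0+6)*E'*D := by ring
    · push_neg at hDA
      have hBle' : ‖B‖ ≤ 3/2 * A := by linarith
      by_cases hDx : D * x ≤ 1
      · -- D*x small : use exp difference bound
        have hfact : Complex.exp (-B * (x:ℂ)) - Complex.exp (-(A:ℂ) * (x:ℂ))
            = Complex.exp (-(A:ℂ) * (x:ℂ)) * (Complex.exp (((A:ℂ) - B) * (x:ℂ)) - 1) := by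
          rw [mul_sub, mul_one, ← Complex.exp_add]
          ring_nf
        have habsarg : ‖((A:ℂ) - B) * (x:ℂ)‖ = D * x := by
          rw [norm_mul, Complex.norm_real, Real.norm_eq_abs, abs_of_pos hx, hDdef,
            show (A:ℂ) - B = -(B - (A:ℂ)) by ring, norm_neg]
        have hNle2 : N ≤ Real.exp (-(A*x)) * (2*(D*x)) := by
          rw [hNdef, hfact, norm_mul, habsAx]
          apply mul_le_mul_of_nonneg_left _ (Real.exp_nonneg _)
          calc ‖Complex.exp (((A:ℂ) - B) * (x:ℂ)) - 1‖
              ≤ 2 * ‖((A:ℂ) - B) * (x:ℂ)‖ :=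
                Complex.norm_exp_sub_one_le (by rw [habsarg]; exact hDx)
            _ = 2*(D*x) := by rw [habsarg]
        calc ‖B‖ * N ≤ (3/2*A) * (Real.exp (-(A*x)) * (2*(D*x))) :=
              mul_le_mul hBle' hNle2 hN0 (by positivity)
          _ = 3*(A*x*Real.exp (-(A*x)))*D := by ring
          _ ≤ 3*(2*Real.exp (-(A*x/2)))*D := by
              apply mul_le_mul_of_nonneg_right _ hD0.le
              exact mul_le_mul_of_nonneg_left (aux_texp (A*x)) (by norm_num)
          _ = (6*Real.exp (-(A*x/2)))*D := by ring
          _ ≤ (6*E')*D := by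
              apply mul_le_mul_of_nonneg_right _ hD0.le
              linarith [hAxE']
          _ ≤ ((6/c0+6)*E')*D := by
              apply mul_le_mul_of_nonneg_right _ hD0.le
              exact mul_le_mul_of_nonneg_right (by linarith) hE'0.le
          _ = (6/c0+6)*E'*D := by ring
      · push_neg at hDx
        -- D*x > 1
        have hEeq : Real.exp (-(c0*(A*x))) = E := by rw [hEdef]; ring_nf
        have h2 : c0 * (A*x) * Real.exp (-(c0*(A*x))) ≤ 2 * Real.exp (-(c0*(A*x)/2)) :=
          aux_texp (c0*(A*x))
        have h3 : Real.exp (-(c0*(A*x)/2)) ≤ E' := by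
          apply Real.exp_le_exp.2
          linarith [hcAx]
        have h7 : 3*(c0*(A*x)*E) ≤ 6*E' := by
          rw [← hEeq]
          linarith [h2, h3]
        have hcx : (0:ℝ) < c0 * x := by positivity
        refine le_of_mul_le_mul_right ?_ hcx
        have stepL : ‖B‖ * N * (c0*x) ≤ 6*E' := by
          have hL1 : ‖B‖ * N ≤ 3*A*E := by
            calc ‖B‖ * N ≤ (3/2*A) * (2*E) :=
                  mul_le_mul hBle' hNle hN0 (by positivity)
              _ = 3*A*E := by ring
          calc ‖B‖ * N * (c0*x) ≤ 3*A*E * (c0*x) :=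
                mul_le_mul_of_nonneg_right hL1 hcx.le
            _ = 3*(c0*(A*x)*E) := by ring
            _ ≤ 6*E' := h7
        have stepR : 6*E' ≤ (6/c0+6)*E'*D*(c0*x) := by
          have hexp : (6/c0+6)*E'*D*(c0*x) = 6*(E'*(D*x)) + 6*c0*(E'*(D*x)) := by
            field_simp
          have h8 : E' ≤ E'*(D*x) := le_mul_of_one_le_right hE'0.le hDx.le
          have h9 : (0:ℝ) ≤ 6*c0*(E'*(D*x)) := by positivity
          rw [hexp]
          linarith
        linarith
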